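/- The six qubit states |0⟩, |1⟩, |±⟩ = (|0⟩±|1⟩)/√2, |±̃⟩ = (|0⟩±i|1⟩)/√2 with uniform probability 1/6 form a 3-copy CSS: (1/6) Σ_α (|α⟩⟨α|)^{⊗3} = P_+^3 / 4, where P_+^3 is the projector onto Sym^3(ℂ^2) (dimension 4). -/

import Mathlib

open scoped BigOperators

/-- `M`-fold tensor power `|φ⟩^{⊗M}` of a vector `φ ∈ ℂ^d`, as a vector on the
computational product basis `Fin M → Fin d`. -/
noncomputable def vecPow {d : ℕ} (M : ℕ) (φ : Fin d → ℂ) : (Fin M → Fin d) → ℂ :=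
  fun f => ∏ i, φ (f i)

/-- Rank-one operator `|v⟩⟨v|`. -/
noncomputable def projOp {n : Type*} [Fintype n] (v : n → ℂ) : Matrix n n ℂ :=
  Matrix.of fun i j => v i * star (v j)

/-- The orthogonal projector `P_+^M` onto the symmetric subspace of `(ℂ^d)^{⊗M}`. -/
noncomputable def symProj (d M : ℕ) : Matrix (Fin M → Fin d) (Fin M → Fin d) ℂ :=
  Matrix.of fun f g =>
    (∑ σ : Equiv.Perm (Fin M), if f = g ∘ σ then (1 : ℂ) else 0) / (Nat.factorial M : ℂ)

/-- `d_M^+ = C(M+d-1, M)`, the dimension of the symmetric subspace. -/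
def dPlus (d M : ℕ) : ℕ := (M + d - 1).choose M

/-- The six single-qubit Pauli eigenstates
`|0⟩, |1⟩, |±⟩ = (|0⟩±|1⟩)/√2, |±̃⟩ = (|0⟩±i|1⟩)/√2`. -/
noncomputable def sixStates : Fin 6 → Fin 2 → ℂ :=
  ![![1, 0],
    ![0, 1],
    ![(((Real.sqrt 2)⁻¹ : ℝ) : ℂ), (((Real.sqrt 2)⁻¹ : ℝ) : ℂ)],
    ![(((Real.sqrt 2)⁻¹ : ℝ) : ℂ), -(((Real.sqrt 2)⁻¹ : ℝ) : ℂ)],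
    ![(((Real.sqrt 2)⁻¹ : ℝ) : ℂ), Complex.I * (((Real.sqrt 2)⁻¹ : ℝ) : ℂ)],
    ![(((Real.sqrt 2)⁻¹ : ℝ) : ℂ), -(Complex.I * (((Real.sqrt 2)⁻¹ : ℝ) : ℂ))]]


lemma perm3_univ : (Finset.univ : Finset (Equiv.Perm (Fin 3))) =
    {1, Equiv.swap 0 1, Equiv.swap 0 2, Equiv.swap 1 2,
     Equiv.swap 0 1 * Equiv.swap 1 2, Equiv.swap 1 2 * Equiv.swap 0 1} := by decide

lemma perm3_sum (F : Equiv.Perm (Fin 3) → ℂ) :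
    ∑ σ : Equiv.Perm (Fin 3), F σ =
      F 1 + F (Equiv.swap 0 1) + F (Equiv.swap 0 2) + F (Equiv.swap 1 2) +
      F (Equiv.swap 0 1 * Equiv.swap 1 2) + F (Equiv.swap 1 2 * Equiv.swap 0 1) := by
  rw [perm3_univ, Finset.sum_insert (by decide), Finset.sum_insert (by decide),
      Finset.sum_insert (by decide), Finset.sum_insert (by decide),
      Finset.sum_pair (by decide)]
  ring

lemma six0 : sixStates 0 = ![1, 0] := rfl
lemma six1 : sixStates 1 = ![0, 1] := rfl
lemma six2 : sixStates 2 = ![(((Real.sqrt 2)⁻¹ : ℝ) : ℂ), (((Real.sqrt 2)⁻¹ : ℝ) : ℂ)] := rfl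
lemma six3 : sixStates 3 = ![(((Real.sqrt 2)⁻¹ : ℝ) : ℂ), -(((Real.sqrt 2)⁻¹ : ℝ) : ℂ)] := rfl
lemma six4 : sixStates 4 = ![(((Real.sqrt 2)⁻¹ : ℝ) : ℂ), Complex.I * (((Real.sqrt 2)⁻¹ : ℝ) : ℂ)] := rfl
lemma six5 : sixStates 5 = ![(((Real.sqrt 2)⁻¹ : ℝ) : ℂ), -(Complex.I * (((Real.sqrt 2)⁻¹ : ℝ) : ℂ))] := rfl

set_option maxHeartbeats 4000000 in
lemma css_key (a b c a' b' c' : Fin 2) :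
    (6 : ℂ)⁻¹ * ∑ α : Fin 6,
        vecPow 3 (sixStates α) ![a, b, c] * star (vecPow 3 (sixStates α) ![a', b', c'])
      = (4 : ℂ)⁻¹ * symProj 2 3 ![a, b, c] ![a', b', c'] := by
  have h2 : (((Real.sqrt 2 : ℝ)) : ℂ) ^ 2 = 2 := by
    norm_cast
    rw [Real.sq_sqrt] <;> norm_num
  have h6 : (((Real.sqrt 2 : ℝ)) : ℂ) ^ 6 = 8 := by
    calc (((Real.sqrt 2 : ℝ)) : ℂ) ^ 6 = ((((Real.sqrt 2 : ℝ)) : ℂ) ^ 2) ^ 3 := by ring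
    _ = 8 := by rw [h2]; norm_num
  have hI : Complex.I ^ 6 = -1 := by
    calc Complex.I ^ 6 = (Complex.I ^ 2) ^ 3 := by ring
    _ = -1 := by rw [Complex.I_sq]; norm_num
  have h4 : (((Real.sqrt 2 : ℝ)) : ℂ) ^ 4 = 4 := by
    calc (((Real.sqrt 2 : ℝ)) : ℂ) ^ 4 = ((((Real.sqrt 2 : ℝ)) : ℂ) ^ 2) ^ 2 := by ring
    _ = 4 := by rw [h2]; norm_num
  have hinv : (((Real.sqrt 2 : ℝ)) : ℂ)⁻¹ = (((Real.sqrt 2 : ℝ)) : ℂ) / 2 := by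
    have hs : (((Real.sqrt 2 : ℝ)) : ℂ) ≠ 0 := by
      exact_mod_cast (Real.sqrt_pos.mpr (by norm_num : (0:ℝ) < 2)).ne'
    field_simp
    rw [h2]
  fin_cases a <;> fin_cases b <;> fin_cases c <;> fin_cases a' <;> fin_cases b' <;> fin_cases c' <;>
  · simp only [vecPow, symProj, Matrix.of_apply, Fin.sum_univ_six, Fin.prod_univ_three,
      perm3_sum, six0, six1, six2, six3, six4, six5, Matrix.cons_val_zero,
      Matrix.cons_val_one, Matrix.head_cons, Matrix.cons_val', Matrix.head_fin_const,
      Matrix.empty_val', Matrix.cons_val_fin_one]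
    simp (config := { decide := true }) only [if_true, if_false]
    norm_num [star_mul', Complex.conj_I, Nat.factorial]
    all_goals (ring_nf; simp [h6, hI, Complex.I_sq]; try norm_num)
    all_goals (simp only [h4, hinv]; ring_nf; simp only [h2, Complex.I_sq]; ring_nf)

/-- The six Pauli eigenstates with uniform probability `1/6` form a
3-copy CSS: `(1/6) Σ_α (|α⟩⟨α|)^{⊗3} = P_+^3 / 4` on `(ℂ²)^{⊗3}`. -/
theorem six_states_three_copy_css :
    (6 : ℂ)⁻¹ • ∑ α : Fin 6, projOp (vecPow 3 (sixStates α))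
      = (4 : ℂ)⁻¹ • symProj 2 3 := by
  ext f g
  have hf : f = ![f 0, f 1, f 2] := by funext i; fin_cases i <;> rfl
  have hg : g = ![g 0, g 1, g 2] := by funext i; fin_cases i <;> rfl
  have := css_key (f 0) (f 1) (f 2) (g 0) (g 1) (g 2)
  rw [← hf, ← hg] at this
  simpa [Matrix.smul_apply, Matrix.sum_apply, projOp, smul_eq_mul, Finset.mul_sum] using this
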